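/- Let Σ ∈ ℝ^{p×p} be symmetric positive semidefinite, and let S ⊆ {1,…,p} be nonempty with S ≠ {1,…,p} and Σ_{SS} invertible. Suppose that for every β* ∈ ℝ^p with β*_k = 0 for all k ∉ S and with β*_j ∈ {−t, t} for all j ∈ S for some t > 0, there exist λ > 0 and a minimizer β̂ of the function β ↦ (1/2)·βᵀΣβ − βᵀΣβ* + λ‖β‖₁ over ℝ^p such that β̂_k = 0 for all k ∉ S, β̂_j ≠ 0 for all j ∈ S, and sign(β̂_j) = sign(β*_j) for all j ∈ S. Then ‖Σ_{S^cS}·Σ_{SS}^{-1}‖_∞ ≤ 1, where ‖·‖_∞ denotes the ℓ_∞→ℓ_∞ operator norm. -/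
import Mathlib
open Matrix BigOperators
noncomputable section

def lassoObj {p : ℕ} (Sig : Matrix (Fin p) (Fin p) ℝ) (βs : Fin p → ℝ) (lam : ℝ)
    (β : Fin p → ℝ) : ℝ :=
  (1 / 2) * (β ⬝ᵥ Sig.mulVec β) - β ⬝ᵥ Sig.mulVec βs + lam * ∑ i, |β i|

lemma aux_small (a c ε : ℝ) (hε : 0 < ε) (h : ∀ s : ℝ, 0 < s → s < ε → 0 ≤ a * s + c) :
    0 ≤ c := by
  by_contra hc
  push_neg at hc
  set s : ℝ := min (ε / 2) (-c / (|a| + 1)) with hs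
  have ha : (0:ℝ) < |a| + 1 := by positivity
  have hs0 : 0 < s := lt_min (by linarith) (div_pos (by linarith) ha)
  have hsε : s < ε := lt_of_le_of_lt (min_le_left _ _) (by linarith)
  have h1 : a * s ≤ |a| * s := mul_le_mul_of_nonneg_right (le_abs_self a) hs0.le
  have h2 : |a| * s < -c := by
    have : s ≤ -c / (|a| + 1) := min_le_right _ _
    have h3 : |a| * s ≤ |a| * (-c / (|a| + 1)) :=
      mul_le_mul_of_nonneg_left this (abs_nonneg a)
    have h4 : |a| * (-c / (|a| + 1)) < -c := by
      rw [mul_div_assoc']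
      rw [div_lt_iff₀ ha]
      nlinarith [abs_nonneg a]
    linarith
  have := h s hs0 hsε
  linarith

lemma dot_symm {p : ℕ} (Sig : Matrix (Fin p) (Fin p) ℝ) (h : Sig.IsSymm) (v w : Fin p → ℝ) :
    v ⬝ᵥ Sig.mulVec w = w ⬝ᵥ Sig.mulVec v := by
  rw [Matrix.dotProduct_mulVec, ← Matrix.mulVec_transpose, h.eq, dotProduct_comm]

lemma key_ineq {p : ℕ} (Sig : Matrix (Fin p) (Fin p) ℝ) (hSym : Sig.IsSymm)
    (βs : Fin p → ℝ) (lam : ℝ) (βh : Fin p → ℝ)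
    (hmin : ∀ γ : Fin p → ℝ, lassoObj Sig βs lam βh ≤ lassoObj Sig βs lam γ)
    (i : Fin p) (s : ℝ) :
    0 ≤ (1/2) * (s^2 * Sig i i) + s * (Sig.mulVec (βh - βs) i)
      + lam * (|βh i + s| - |βh i|) := by
  set v : Fin p → ℝ := s • (Pi.single i 1 : Fin p → ℝ) with hvdef
  have h := hmin (βh + v)
  unfold lassoObj at h
  have hv : ∀ w : Fin p → ℝ, v ⬝ᵥ w = s * w i := by
    intro w
    rw [hvdef, smul_dotProduct, single_dotProduct, smul_eq_mul, one_mul]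
  have hmv : Sig.mulVec v = fun j => s * (Sig j i) := by
    rw [hvdef, Matrix.mulVec_smul, Matrix.mulVec_single]
    ext j; simp [mul_comm]
  have hb : βh ⬝ᵥ Sig.mulVec v = s * Sig.mulVec βh i := by
    rw [dot_symm Sig hSym βh v, hv (Sig.mulVec βh)]
  have hvv : v ⬝ᵥ Sig.mulVec v = s^2 * Sig i i := by
    rw [hv (Sig.mulVec v), hmv]; ring
  have e1 : (βh + v) ⬝ᵥ Sig.mulVec (βh + v)
      = βh ⬝ᵥ Sig.mulVec βh + 2 * (s * Sig.mulVec βh i) + s^2 * Sig i i := by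
    rw [add_dotProduct, Matrix.mulVec_add, dotProduct_add,
      dotProduct_add, hb, hv (Sig.mulVec βh), hvv]
    ring
  have e2 : (βh + v) ⬝ᵥ Sig.mulVec βs
      = βh ⬝ᵥ Sig.mulVec βs + s * Sig.mulVec βs i := by
    rw [add_dotProduct, hv]
  have e3 : ∑ j, |(βh + v) j| = ∑ j, |βh j| + (|βh i + s| - |βh i|) := by
    have hupdate : (βh + v) = Function.update βh i (βh i + s) := by
      ext j
      by_cases hj : j = i
      · subst hj; simp [hvdef]
      · simp [hvdef, Function.update_of_ne hj, Pi.single_eq_of_ne hj]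
    rw [hupdate]
    rw [← Finset.sum_erase_add _ _ (Finset.mem_univ i),
        ← Finset.sum_erase_add _ (fun j => |βh j|) (Finset.mem_univ i)]
    have : ∑ j ∈ Finset.univ.erase i, |Function.update βh i (βh i + s) j|
        = ∑ j ∈ Finset.univ.erase i, |βh j| := by
      apply Finset.sum_congr rfl
      intro j hj
      rw [Function.update_of_ne (Finset.ne_of_mem_erase hj)]
    rw [this, Function.update_self]
    ring
  rw [e1, e2, e3] at h
  have e4 : Sig.mulVec (βh - βs) i = Sig.mulVec βh i - Sig.mulVec βs i := by
    rw [Matrix.mulVec_sub]; rfl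
  rw [e4]
  nlinarith [h]

lemma div_pos_step (s c : ℝ) (hs : 0 < s) (h : 0 ≤ s * c) : 0 ≤ c := by nlinarith

theorem lasso_incoherence_necessary {p : ℕ} (Sig : Matrix (Fin p) (Fin p) ℝ)
    (S : Finset (Fin p)) (hSym : Sig.IsSymm) (hPSD : Sig.PosSemidef)
    (hS : S.Nonempty) (hne : S ≠ Finset.univ)
    (hInv : IsUnit (Sig.submatrix ((↑) : {x // x ∈ S} → Fin p)
      ((↑) : {x // x ∈ S} → Fin p)))
    (hrec : ∀ (t : ℝ), 0 < t → ∀ βs : Fin p → ℝ,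
      (∀ k ∉ S, βs k = 0) → (∀ j ∈ S, βs j = t ∨ βs j = -t) →
      ∃ lam > (0 : ℝ), ∃ βh : Fin p → ℝ,
        (∀ γ : Fin p → ℝ, lassoObj Sig βs lam βh ≤ lassoObj Sig βs lam γ) ∧
        (∀ k ∉ S, βh k = 0) ∧ (∀ j ∈ S, βh j ≠ 0) ∧
        (∀ j ∈ S, Real.sign (βh j) = Real.sign (βs j))) :
    ∀ k : {x // x ∉ S}, ∑ j : {x // x ∈ S},
      |(Sig.submatrix ((↑) : {x // x ∉ S} → Fin p) ((↑) : {x // x ∈ S} → Fin p) *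
        (Sig.submatrix ((↑) : {x // x ∈ S} → Fin p)
          ((↑) : {x // x ∈ S} → Fin p))⁻¹) k j| ≤ 1 := by
  intro k
  set A := Sig.submatrix ((↑) : {x // x ∈ S} → Fin p) ((↑) : {x // x ∈ S} → Fin p) with hA
  set B := Sig.submatrix ((↑) : {x // x ∉ S} → Fin p) ((↑) : {x // x ∈ S} → Fin p) with hB
  set M := B * A⁻¹ with hM
  -- the sign pattern
  set ε : {x // x ∈ S} → ℝ := fun j => if 0 ≤ M k j then 1 else -1 with hε
  set βs : Fin p → ℝ := fun i => if h : i ∈ S then ε ⟨i, h⟩ else 0 with hβs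
  obtain ⟨lam, hlam, βh, hmin, h0, hnz, hsign⟩ := hrec 1 one_pos βs
    (fun i hi => by simp [hβs, hi])
    (fun j hj => by
      simp only [hβs, dif_pos hj, hε]
      by_cases h : 0 ≤ M k ⟨j, hj⟩ <;> simp [h])
  -- sign of βh on S equals ε
  have hsgn : ∀ (j : Fin p) (hj : j ∈ S), Real.sign (βh j) = ε ⟨j, hj⟩ := by
    intro j hj
    rw [hsign j hj]
    simp only [hβs, dif_pos hj, hε]
    by_cases h : 0 ≤ M k ⟨j, hj⟩
    · simp [h, Real.sign_one]
    · simp only [h, if_false]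
      rw [show (-1 : ℝ) = -(1:ℝ) by ring, Real.sign_neg, Real.sign_one]
  set r : Fin p → ℝ := Sig.mulVec (βh - βs) with hr
  -- stationarity on S
  have hstatS : ∀ (j : Fin p) (hj : j ∈ S), r j = -lam * ε ⟨j, hj⟩ := by
    intro j hj
    have hne0 := hnz j hj
    set σ : ℝ := Real.sign (βh j) with hσ
    have habs : ∀ s : ℝ, |s| < |βh j| → |βh j + s| - |βh j| = s * σ := by
      intro s hs
      rcases lt_or_gt_of_ne hne0 with hneg | hpos
      · rw [hσ, Real.sign_of_neg hneg]
        rw [abs_of_neg hneg] at hs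
        have h1 : βh j + s < 0 := by cases abs_lt.mp hs; linarith
        rw [abs_of_neg hneg, abs_of_neg h1]; ring
      · rw [hσ, Real.sign_of_pos hpos]
        rw [abs_of_pos hpos] at hs
        have h1 : 0 < βh j + s := by cases abs_lt.mp hs; linarith
        rw [abs_of_pos hpos, abs_of_pos h1]; ring
    have hb0 : 0 < |βh j| := abs_pos.mpr hne0
    have hge : 0 ≤ r j + lam * σ := by
      apply aux_small ((1/2) * Sig j j) _ |βh j| hb0
      intro s hs0 hsb
      have hk := key_ineq Sig hSym βs lam βh hmin j s
      rw [habs s (by rw [abs_of_pos hs0]; exact hsb)] at hk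
      apply div_pos_step s _ hs0
      nlinarith [hk]
    have hle : r j + lam * σ ≤ 0 := by
      have : 0 ≤ -(r j + lam * σ) := by
        apply aux_small ((1/2) * Sig j j) _ |βh j| hb0
        intro s hs0 hsb
        have hk := key_ineq Sig hSym βs lam βh hmin j (-s)
        rw [habs (-s) (by rw [abs_neg, abs_of_pos hs0]; exact hsb)] at hk
        apply div_pos_step s _ hs0
        nlinarith [hk]
      linarith
    have : r j + lam * σ = 0 := le_antisymm hle hge
    rw [hσ, hsgn j hj] at this
    linarith
  -- stationarity off S
  have hstatK : ∀ (i : Fin p), i ∉ S → |r i| ≤ lam := by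
    intro i hi
    have hβh0 : βh i = 0 := h0 i hi
    have hge : 0 ≤ r i + lam := by
      apply aux_small ((1/2) * Sig i i) _ 1 one_pos
      intro s hs0 _
      have hk := key_ineq Sig hSym βs lam βh hmin i s
      rw [hβh0] at hk
      simp only [zero_add, abs_zero, sub_zero, abs_of_pos hs0] at hk
      apply div_pos_step s _ hs0
      nlinarith [hk]
    have hle : 0 ≤ -r i + lam := by
      apply aux_small ((1/2) * Sig i i) _ 1 one_pos
      intro s hs0 _
      have hk := key_ineq Sig hSym βs lam βh hmin i (-s)
      rw [hβh0] at hk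
      simp only [zero_add, abs_zero, sub_zero, abs_neg, abs_of_pos hs0] at hk
      apply div_pos_step s _ hs0
      nlinarith [hk]
    rw [abs_le]; constructor <;> linarith
  -- linear algebra
  set dS : {x // x ∈ S} → ℝ := fun j => βh j - βs j with hdS
  have hrsum : ∀ i : Fin p, r i = ∑ j : {x // x ∈ S}, Sig i j * dS j := by
    intro i
    have h1 : r i = ∑ j : Fin p, Sig i j * (βh j - βs j) := rfl
    have h2 : ∑ j ∈ S, Sig i j * (βh j - βs j) = ∑ j : Fin p, Sig i j * (βh j - βs j) := by
      apply Finset.sum_subset S.subset_univ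
      intro j _ hj
      rw [h0 j hj]
      simp [hβs, hj]
    have h3 := Finset.sum_coe_sort S (fun j => Sig i j * (βh j - βs j))
    rw [h1, ← h2, ← h3]
  have hAd : A.mulVec dS = fun j => -lam * ε j := by
    ext j
    have : A.mulVec dS j = r j := by
      rw [hrsum]
      simp [Matrix.mulVec, dotProduct, hA]
    rw [this, hstatS j.1 j.2]
  have hdet : IsUnit A.det := (Matrix.isUnit_iff_isUnit_det A).mp hInv
  have hdSe : dS = (-lam) • A⁻¹.mulVec ε := by
    have h1 : A⁻¹.mulVec (A.mulVec dS) = dS := by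
      rw [Matrix.mulVec_mulVec, Matrix.nonsing_inv_mul A hdet, Matrix.one_mulVec]
    rw [← h1, hAd]
    have : (fun j => -lam * ε j) = (-lam) • ε := by ext j; simp
    rw [this, Matrix.mulVec_smul]
  have hrk : r k.1 = -lam * ∑ j : {x // x ∈ S}, |M k j| := by
    have h1 : r k.1 = B.mulVec dS k := by
      rw [hrsum]
      simp [Matrix.mulVec, dotProduct, hB]
    rw [h1, hdSe, Matrix.mulVec_smul, Matrix.mulVec_mulVec]
    have h2 : (M.mulVec ε) k = ∑ j : {x // x ∈ S}, |M k j| := by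
      simp only [Matrix.mulVec, dotProduct]
      apply Finset.sum_congr rfl
      intro j _
      by_cases h : 0 ≤ M k j
      · simp [hε, h, abs_of_nonneg h]
      · push_neg at h
        simp [hε, not_le.mpr h, abs_of_neg h]
    simp only [← hM, Pi.smul_apply, smul_eq_mul, h2]
  have hfin := hstatK k.1 k.2
  rw [hrk] at hfin
  have hsum_nonneg : 0 ≤ ∑ j : {x // x ∈ S}, |M k j| :=
    Finset.sum_nonneg fun j _ => abs_nonneg _
  rw [abs_mul, abs_of_nonneg hsum_nonneg, abs_neg, abs_of_pos hlam] at hfin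
  nlinarith [hfin, hsum_nonneg, hlam]
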